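/- If (f_i)_{i≥1} is a nonnegative summable sequence with m₀ = Σ_i f_i and b_i = Σ_{j≥i} f_j/(j+1), and f is an equilibrium of model D (i.e., 0 = Σ_{j=1}^{i−1} f_j f_{i−j} − (2m₀ + 1) f_i + 2 b_i for all i ≥ 1), then m₀ satisfies 0 = −m₀² + m₀ − 2 b₁, i.e., b₁ = (m₀ − m₀²)/2. -/

import Mathlib

/-- Summing the model D equilibrium equations (testing with φ ≡ 1) yields
`b₁ = (m₀ - m₀²)/2`. -/
theorem stmt_9 (f : ℕ → ℝ) (b : ℕ → ℝ) (m₀ : ℝ)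
    (hf0 : f 0 = 0) (hfpos : ∀ i, 0 ≤ f i)
    (hsum : Summable f) (hsum1 : Summable (fun i : ℕ => (i : ℝ) * f i))
    (hm₀ : m₀ = ∑' i : ℕ, f i)
    (hb : ∀ i, b i = ∑' j : ℕ, if i ≤ j then f j / ((j : ℝ) + 1) else 0)
    (hequi : ∀ i, 1 ≤ i →
      0 = (∑ j ∈ Finset.Ico 1 i, f j * f (i - j)) - (2 * m₀ + 1) * f i + 2 * b i) :
    b 1 = (m₀ - m₀ ^ 2) / 2 := by
  classical
  -- norms
  have hnorm : Summable (fun n => ‖f n‖) := by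
    simpa [Real.norm_of_nonneg (hfpos _)] using hsum
  set g : ℕ → ℝ := fun n => ∑ k ∈ Finset.range (n + 1), f k * f (n - k) with hgdef
  have hgsum : Summable g :=
    (summable_norm_sum_mul_range_of_summable_norm hnorm hnorm).of_norm
  have htg : ∑' n, g n = m₀ * m₀ := by
    rw [hm₀]
    exact (tsum_mul_tsum_eq_tsum_sum_range_of_summable_norm hnorm hnorm).symm
  have hg0 : g 0 = 0 := by simp [hgdef, hf0]
  -- g at i+1 equals the Ico sum
  have hgIco : ∀ i : ℕ, g (i + 1) = ∑ j ∈ Finset.Ico 1 (i + 1), f j * f (i + 1 - j) := by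
    intro i
    have h1 : Finset.range (i + 2) = insert 0 (Finset.Ico 1 (i + 2)) := by
      ext k; simp [Finset.mem_range, Finset.mem_Ico, Nat.lt_succ_iff]
      omega
    have h2 : Finset.Ico 1 (i + 2) = insert (i + 1) (Finset.Ico 1 (i + 1)) := by
      ext k; simp [Finset.mem_Ico]; omega
    simp only [hgdef]
    rw [h1, Finset.sum_insert (by simp), h2,
      Finset.sum_insert (by simp), hf0]
    simp [hf0]
  -- the equilibrium at i+1
  have heq : ∀ i : ℕ, b (i + 1) = ((2 * m₀ + 1) * f (i + 1) - g (i + 1)) / 2 := by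
    intro i
    have := hequi (i + 1) (Nat.le_add_left 1 i)
    rw [← hgIco i] at this
    linarith
  -- shifted sums
  have hfs : Summable (fun i => f (i + 1)) := (summable_nat_add_iff 1).2 hsum
  have hgs : Summable (fun i => g (i + 1)) := (summable_nat_add_iff 1).2 hgsum
  have htfs : ∑' i, f (i + 1) = m₀ := by
    have := Summable.tsum_eq_zero_add hsum
    rw [hf0, zero_add] at this
    rw [← hm₀] at this; exact this.symm
  have htgs : ∑' i, g (i + 1) = m₀ * m₀ := by
    have := Summable.tsum_eq_zero_add hgsum
    rw [hg0, zero_add] at this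
    rw [this] at htg; exact htg
  -- summability of b (· + 1) and its tsum
  have hbs : Summable (fun i => b (i + 1)) := by
    simp only [heq]
    exact (((hfs.mul_left (2 * m₀ + 1)).sub hgs).div_const 2)
  have htbs : ∑' i, b (i + 1) = ((2 * m₀ + 1) * m₀ - m₀ * m₀) / 2 := by
    simp only [heq]
    rw [tsum_div_const, Summable.tsum_sub (hfs.mul_left _) hgs, tsum_mul_left, htfs, htgs]
  -- double sum computation: ∑' i, b (i+1) = ∑' j, j * (f j / (j+1))
  have hdiv_nonneg : ∀ j : ℕ, 0 ≤ f j / ((j : ℝ) + 1) := by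
    intro j
    exact div_nonneg (hfpos j) (by positivity)
  have hdivsum : Summable (fun j : ℕ => f j / ((j : ℝ) + 1)) := by
    apply Summable.of_nonneg_of_le hdiv_nonneg _ hsum
    intro j
    rw [div_le_iff₀ (by positivity)]
    nlinarith [hfpos j, (Nat.cast_nonneg j : (0:ℝ) ≤ j)]
  have hjdivsum : Summable (fun j : ℕ => (j : ℝ) * (f j / ((j : ℝ) + 1))) := by
    apply Summable.of_nonneg_of_le
      (fun j => mul_nonneg (Nat.cast_nonneg j) (hdiv_nonneg j)) _ hsum1
    intro j
    apply mul_le_mul_of_nonneg_left _ (Nat.cast_nonneg j)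
    rw [div_le_iff₀ (by positivity)]
    nlinarith [hfpos j, (Nat.cast_nonneg j : (0:ℝ) ≤ j)]
  set F : ℕ × ℕ → ℝ := fun p => if p.2 + 1 ≤ p.1 then f p.1 / ((p.1 : ℝ) + 1) else 0
    with hFdef
  have hFnonneg : ∀ p, 0 ≤ F p := by
    intro p; simp only [hFdef]
    split
    · exact hdiv_nonneg _
    · exact le_refl 0
  have hFrow : ∀ j : ℕ, Summable (fun i => F (j, i)) := by
    intro j
    apply summable_of_ne_finset_zero (s := Finset.range j)
    intro i hi
    simp only [Finset.mem_range, not_lt] at hi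
    simp only [hFdef]
    rw [if_neg (by omega)]
  have hFrowsum : ∀ j : ℕ, ∑' i, F (j, i) = (j : ℝ) * (f j / ((j : ℝ) + 1)) := by
    intro j
    rw [tsum_eq_sum (s := Finset.range j)
      (fun i hi => by
        simp only [Finset.mem_range, not_lt] at hi
        simp only [hFdef]; rw [if_neg (by omega)])]
    have : ∀ i ∈ Finset.range j, F (j, i) = f j / ((j : ℝ) + 1) := by
      intro i hi
      simp only [Finset.mem_range] at hi
      simp only [hFdef]; rw [if_pos (by omega)]
    rw [Finset.sum_congr rfl this, Finset.sum_const, Finset.card_range, nsmul_eq_mul]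
  have hFsum : Summable F := by
    apply (summable_prod_of_nonneg (fun p => hFnonneg p)).2
    constructor
    · exact hFrow
    · apply Summable.congr hjdivsum
      intro j; exact (hFrowsum j).symm
  have hFcol : ∀ i : ℕ, Summable (fun j => F (j, i)) := by
    intro i
    apply Summable.of_nonneg_of_le (fun j => hFnonneg (j, i)) _ hdivsum
    intro j
    simp only [hFdef]
    split
    · exact le_refl _
    · exact hdiv_nonneg j
  have hbF : ∀ i : ℕ, b (i + 1) = ∑' j, F (j, i) := by
    intro i
    rw [hb (i + 1)]
  -- swap
  have hswap : ∑' i, ∑' j, F (j, i) = ∑' j, ∑' i, F (j, i) :=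
    Summable.tsum_comm' (f := fun j i => F (j, i)) hFsum hFrow hFcol
  have hkey : ∑' j : ℕ, (j : ℝ) * (f j / ((j : ℝ) + 1))
      = ((2 * m₀ + 1) * m₀ - m₀ * m₀) / 2 := by
    rw [← tsum_congr hFrowsum, ← hswap, tsum_congr (fun i => (hbF i).symm), htbs]
  -- relate to b 1
  have hb1 : b 1 = ∑' j : ℕ, f j / ((j : ℝ) + 1) := by
    rw [hb 1]
    apply tsum_congr
    intro j
    rcases Nat.eq_zero_or_pos j with h | h
    · subst h; simp [hf0]
    · rw [if_pos (by omega : 1 ≤ j)]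
  have hsplit : ∑' j : ℕ, (j : ℝ) * (f j / ((j : ℝ) + 1)) = m₀ - b 1 := by
    have h1 : ∀ j : ℕ, (j : ℝ) * (f j / ((j : ℝ) + 1)) = f j - f j / ((j : ℝ) + 1) := by
      intro j
      have hj : ((j : ℝ) + 1) ≠ 0 := by positivity
      field_simp
      ring
    rw [tsum_congr h1, Summable.tsum_sub hsum hdivsum, ← hm₀, hb1]
  rw [hsplit] at hkey
  linarith
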